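/- Let T₁ and T₂ be two centered H-valued random variables on a common probability space with E‖Tᵢ‖²_H < ∞ for i = 1, 2, and let R_{ij} = E[Tᵢ ⊗ Tⱼ] (Bochner integrals) for i, j ∈ {1, 2}. If the cross-covariance operator R₁₂ is self-adjoint, then R₁₂ = R₂₁ and ‖R₁₂‖₁ ≤ ‖R₁₁‖₁^{1/2} · ‖R₂₂‖₁^{1/2}. -/

import Mathlib

open MeasureTheory InnerProductSpace Filter
open scoped ENNReal NNReal RealInnerProductSpace BigOperators Topology

noncomputable section

namespace RF

/-- Euclidean three-space. -/
abbrev E3 : Type := EuclideanSpace ℝ (Fin 3)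

/-- The unit two-sphere in `ℝ³`. -/
abbrev S2 : Type := Metric.sphere (0 : E3) 1

/-- A linear isometry of `ℝ³` is a rotation (element of `SO(3)`) if it has determinant one. -/
def IsRotation (ρ : E3 ≃ₗᵢ[ℝ] E3) : Prop :=
  LinearMap.det (ρ.toLinearEquiv : E3 →ₗ[ℝ] E3) = 1

/-- The action of a linear isometry of `ℝ³` on the unit sphere. -/
def rotate (ρ : E3 ≃ₗᵢ[ℝ] E3) (x : S2) : S2 :=
  ⟨ρ x, by
    have hx : ‖(x : E3)‖ = 1 := mem_sphere_zero_iff_norm.mp x.2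
    rw [mem_sphere_zero_iff_norm, ρ.norm_map]
    exact hx⟩

variable {H : Type*} [NormedAddCommGroup H] [InnerProductSpace ℝ H]

/-- The rank-one operator `u ⊗ v : f ↦ ⟪f, v⟫ • u`. -/
def rankOne (u v : H) : H →L[ℝ] H := (innerSL ℝ v).smulRight u

/-- The trace (nuclear) norm of an operator, as an extended nonnegative real:
`‖A‖₁ = sup { ∑ⱼ |⟪A eⱼ, fⱼ⟫| }`, the supremum being over all pairs of finite orthonormal
families.  It is finite precisely on trace-class operators, where it coincides with the
usual nuclear norm. -/
def traceNorm (A : H →L[ℝ] H) : ℝ≥0∞ :=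
  ⨆ (n : ℕ) (e : Fin n → H) (f : Fin n → H) (_ : Orthonormal ℝ e) (_ : Orthonormal ℝ f),
    ∑ j, (‖⟪A (e j), f j⟫_ℝ‖₊ : ℝ≥0∞)

/-- The trace (nuclear) norm, as a real number (junk value `0` for non-nuclear operators). -/
def traceNormR (A : H →L[ℝ] H) : ℝ := (traceNorm A).toReal

/-- An operator is nuclear (trace class) if its trace norm is finite. -/
def IsNuclear (A : H →L[ℝ] H) : Prop := traceNorm A < ⊤

/-- A fixed choice of index set for a Hilbert basis of `H`. -/
def bIdx (H : Type*) [NormedAddCommGroup H] [InnerProductSpace ℝ H] [CompleteSpace H] :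
    Set H :=
  (exists_hilbertBasis ℝ H).choose

/-- A fixed choice of Hilbert basis (complete orthonormal system) of `H`. -/
def bStd (H : Type*) [NormedAddCommGroup H] [InnerProductSpace ℝ H] [CompleteSpace H] :
    HilbertBasis (bIdx H) ℝ H :=
  (exists_hilbertBasis ℝ H).choose_spec.choose

variable [CompleteSpace H]

/-- The trace of an operator, `Tr A = ∑ᵢ ⟪A eᵢ, eᵢ⟫` over a complete orthonormal system
(basis-independent for nuclear operators). -/
def opTrace (A : H →L[ℝ] H) : ℝ := ∑' i : bIdx H, ⟪A (bStd H i), bStd H i⟫_ℝ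

/-- The squared Hilbert–Schmidt norm `‖A‖₂² = ∑ᵢ ‖A eᵢ‖²` (junk value `0` if not summable). -/
def hsNormSq (A : H →L[ℝ] H) : ℝ := ∑' i : bIdx H, ‖A (bStd H i)‖ ^ 2

/-- The fourth power of the `4`-Schatten norm: `‖A‖₄⁴ = ‖A⋆A‖₂²`. -/
def schatten4Pow4 (A : H →L[ℝ] H) : ℝ :=
  hsNormSq ((ContinuousLinearMap.adjoint A).comp A)

/-- An `H`-valued random variable is centered Gaussian if all its real pairings are centered
Gaussian random variables. -/
def IsCenteredGaussian {Ω : Type*} [MeasurableSpace Ω] (P : Measure Ω) (a : Ω → H) : Prop :=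
  ∀ w : H, ∃ v : ℝ≥0,
    Measure.map (fun ω => ⟪a ω, w⟫_ℝ) P = ProbabilityTheory.gaussianReal 0 v

/-- The autocovariance operator `𝓡_{x,y} = E[T(x) ⊗ T(y)]` of a spherical random field. -/
def cov {Ω : Type*} [MeasurableSpace Ω] (P : Measure Ω) (T : S2 → Ω → H) (x y : S2) :
    H →L[ℝ] H :=
  ∫ ω, rankOne (T x ω) (T y ω) ∂P

/-- An isotropic `H`-valued spherical random field: a jointly measurable collection of
centered, square-integrable `H`-valued random variables indexed by the sphere, whose
autocovariance operators are invariant under rotations. -/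
structure IsIsotropicField {Ω : Type*} [MeasurableSpace Ω] (P : Measure Ω)
    (T : S2 → Ω → H) : Prop where
  jointMeas : StronglyMeasurable (Function.uncurry T)
  centered : ∀ x, ∫ ω, T x ω ∂P = 0
  sqInt : ∀ x, MemLp (T x) 2 P
  isotropic : ∀ ρ : E3 ≃ₗᵢ[ℝ] E3, IsRotation ρ → ∀ x y : S2,
    cov P T (rotate ρ x) (rotate ρ y) = cov P T x y

/-- A measure on the sphere is the surface (Lebesgue) measure if it is rotation invariant
with total mass `4π`. -/
structure IsSphereMeasure (μ : Measure S2) : Prop where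
  mass : μ Set.univ = ENNReal.ofReal (4 * Real.pi)
  invariant : ∀ ρ : E3 ≃ₗᵢ[ℝ] E3, IsRotation ρ → Measure.map (rotate ρ) μ = μ

/-- The `ℓ`-th Legendre polynomial (Rodrigues' formula). -/
def legendreP (ℓ : ℕ) : Polynomial ℝ :=
  ((2 ^ ℓ * ℓ.factorial : ℝ)⁻¹) •
    ((⇑(Polynomial.derivative (R := ℝ)))^[ℓ] ((Polynomial.X ^ 2 - 1) ^ ℓ))

/-- The value of the `ℓ`-th Legendre polynomial. -/
def legval (ℓ : ℕ) (t : ℝ) : ℝ := (legendreP ℓ).eval t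

/-- The north pole `e₃ = (0,0,1)` of the sphere. -/
def northPole : E3 := EuclideanSpace.single 2 1

/-- The central spherical harmonic `Y_{ℓ,0}(x) = √((2ℓ+1)/(4π)) P_ℓ(⟪x, e₃⟫)`. -/
def Y0 (ℓ : ℕ) (x : S2) : ℝ :=
  Real.sqrt ((2 * ℓ + 1) / (4 * Real.pi)) * legval ℓ ⟪(x : E3), northPole⟫_ℝ

/-- The power spectrum operator
`𝓕_ℓ = ∫_{S²×S²} 𝓡_{⟨x,y⟩} Y_{ℓ,0}(x) Y_{ℓ,0}(y) dx dy`. -/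
def psOp {Ω : Type*} [MeasurableSpace Ω] (P : Measure Ω) (T : S2 → Ω → H)
    (μ : Measure S2) (ℓ : ℕ) : H →L[ℝ] H :=
  ∫ p : S2 × S2, (Y0 ℓ p.1 * Y0 ℓ p.2) • cov P T p.1 p.2 ∂(μ.prod μ)

end RF

namespace RF


section Aux

variable {H : Type*} [NormedAddCommGroup H] [InnerProductSpace ℝ H]

@[simp] lemma rankOne_apply (u v x : H) : rankOne u v x = ⟪v, x⟫_ℝ • u := rfl

lemma norm_rankOne_le (u v : H) : ‖rankOne u v‖ ≤ ‖u‖ * ‖v‖ := by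
  rw [rankOne, ContinuousLinearMap.norm_smulRight_apply, innerSL_apply_norm, mul_comm]

lemma _root_.Orthonormal.countable_index [TopologicalSpace.SeparableSpace H]
    {ι : Type*} {v : ι → H} (hv : Orthonormal ℝ v) : Countable ι := by
  refine Pairwise.countable_of_isOpen_disjoint (s := fun i => Metric.ball (v i) (1/2))
    ?_ (fun i => Metric.isOpen_ball) (fun i => Metric.nonempty_ball.2 (by norm_num))
  intro i j hij
  refine Metric.ball_disjoint_ball ?_
  have h1 : ‖v i - v j‖ ^ 2 = 2 := by
    rw [@norm_sub_sq_real]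
    rw [hv.2 hij]
    simp [hv.1 i, hv.1 j]
    norm_num
  have h2 : ‖v i - v j‖ ≥ 1 := by nlinarith [norm_nonneg (v i - v j)]
  rw [dist_eq_norm]; linarith

variable {Ω : Type*} [MeasurableSpace Ω] {P : Measure Ω} [IsProbabilityMeasure P]

lemma aesm_rankOne {S U : Ω → H} (hS : AEStronglyMeasurable S P)
    (hU : AEStronglyMeasurable U P) :
    AEStronglyMeasurable (fun ω => rankOne (S ω) (U ω)) P := by
  have hcont : Continuous (fun p : H × H =>
      ContinuousLinearMap.smulRightL ℝ H H (innerSL ℝ p.2) p.1) := by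
    exact ((ContinuousLinearMap.smulRightL ℝ H H).continuous₂).comp
      (((innerSL ℝ).continuous.comp continuous_snd).prodMk continuous_fst)
  have : (fun ω => rankOne (S ω) (U ω)) = (fun p : H × H =>
      ContinuousLinearMap.smulRightL ℝ H H (innerSL ℝ p.2) p.1) ∘ (fun ω => (S ω, U ω)) := rfl
  rw [this]
  exact hcont.comp_aestronglyMeasurable (hS.prodMk hU)

lemma integrable_mul_of_mem2 {f g : Ω → ℝ} (hf : MemLp f 2 P) (hg : MemLp g 2 P) :
    Integrable (fun ω => f ω * g ω) P := by
  have h := L2.integrable_inner (𝕜 := ℝ) (hf.toLp f) (hg.toLp g)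
  refine h.congr ?_
  filter_upwards [hf.coeFn_toLp, hg.coeFn_toLp] with ω h1 h2
  simp [h1, h2, RCLike.inner_apply, mul_comm]

lemma integrable_rankOne {S U : Ω → H} (hS : MemLp S 2 P) (hU : MemLp U 2 P) :
    Integrable (fun ω => rankOne (S ω) (U ω)) P := by
  refine Integrable.mono' (g := fun ω => ‖S ω‖ * ‖U ω‖)
    (integrable_mul_of_mem2 hS.norm hU.norm) (aesm_rankOne hS.1 hU.1) ?_
  exact Eventually.of_forall fun ω => norm_rankOne_le _ _

variable [CompleteSpace H]

lemma inner_integral_rankOne {S U : Ω → H} (hI : Integrable (fun ω => rankOne (S ω) (U ω)) P)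
    (x y : H) :
    ⟪(∫ ω, rankOne (S ω) (U ω) ∂P) x, y⟫_ℝ = ∫ ω, ⟪x, U ω⟫_ℝ * ⟪S ω, y⟫_ℝ ∂P := by
  have h := ((innerSL ℝ y).comp (ContinuousLinearMap.apply ℝ H x)).integral_comp_comm hI
  simp only [ContinuousLinearMap.coe_comp', Function.comp_apply,
    ContinuousLinearMap.apply_apply, innerSL_apply_apply, rankOne_apply] at h
  rw [real_inner_comm, ← h]
  congr 1; funext ω
  rw [real_inner_smul_right, real_inner_comm (U ω) x, real_inner_comm y (S ω)]

set_option linter.unusedSectionVars false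

omit [CompleteSpace H] in
lemma pointwise_cs {n : ℕ} {e f : Fin n → H} (he : Orthonormal ℝ e) (hf : Orthonormal ℝ f)
    (u v : H) :
    ∑ j, |⟪e j, v⟫_ℝ * ⟪u, f j⟫_ℝ| ≤ ‖u‖ * ‖v‖ := by
  have cs : ∑ j, |⟪e j, v⟫_ℝ| * |⟪u, f j⟫_ℝ| ≤
      Real.sqrt (∑ j, |⟪e j, v⟫_ℝ| ^ 2) * Real.sqrt (∑ j, |⟪u, f j⟫_ℝ| ^ 2) := by
    have h := Finset.sum_mul_sq_le_sq_mul_sq Finset.univ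
      (fun j => |⟪e j, v⟫_ℝ|) (fun j => |⟪u, f j⟫_ℝ|)
    have h0 : (0:ℝ) ≤ ∑ j, |⟪e j, v⟫_ℝ| * |⟪u, f j⟫_ℝ| :=
      Finset.sum_nonneg fun j _ => by positivity
    calc ∑ j, |⟪e j, v⟫_ℝ| * |⟪u, f j⟫_ℝ|
        = Real.sqrt ((∑ j, |⟪e j, v⟫_ℝ| * |⟪u, f j⟫_ℝ|) ^ 2) := (Real.sqrt_sq h0).symm
      _ ≤ Real.sqrt ((∑ j, |⟪e j, v⟫_ℝ| ^ 2) * (∑ j, |⟪u, f j⟫_ℝ| ^ 2)) :=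
          Real.sqrt_le_sqrt h
      _ = _ := Real.sqrt_mul (Finset.sum_nonneg fun j _ => by positivity) _
  have b1 : ∑ j, |⟪e j, v⟫_ℝ| ^ 2 ≤ ‖v‖ ^ 2 := by
    simpa [Real.norm_eq_abs] using he.sum_inner_products_le (s := Finset.univ) v
  have b2 : ∑ j, |⟪u, f j⟫_ℝ| ^ 2 ≤ ‖u‖ ^ 2 := by
    have := hf.sum_inner_products_le (s := Finset.univ) u
    simpa [Real.norm_eq_abs, real_inner_comm] using this
  calc ∑ j, |⟪e j, v⟫_ℝ * ⟪u, f j⟫_ℝ| = ∑ j, |⟪e j, v⟫_ℝ| * |⟪u, f j⟫_ℝ| := by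
        simp [abs_mul]
    _ ≤ Real.sqrt (∑ j, |⟪e j, v⟫_ℝ| ^ 2) * Real.sqrt (∑ j, |⟪u, f j⟫_ℝ| ^ 2) := cs
    _ ≤ Real.sqrt (‖v‖ ^ 2) * Real.sqrt (‖u‖ ^ 2) :=
        mul_le_mul (Real.sqrt_le_sqrt b1) (Real.sqrt_le_sqrt b2)
          (Real.sqrt_nonneg _) (Real.sqrt_nonneg _)
    _ = ‖v‖ * ‖u‖ := by rw [Real.sqrt_sq (norm_nonneg _), Real.sqrt_sq (norm_nonneg _)]
    _ = ‖u‖ * ‖v‖ := mul_comm _ _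

lemma integral_norm_mul_le {S U : Ω → H} (hS : MemLp S 2 P) (hU : MemLp U 2 P) :
    ∫ ω, ‖S ω‖ * ‖U ω‖ ∂P ≤
      Real.sqrt (∫ ω, ‖S ω‖ ^ 2 ∂P) * Real.sqrt (∫ ω, ‖U ω‖ ^ 2 ∂P) := by
  have hpq : Real.HolderConjugate 2 2 := Real.HolderConjugate.two_two
  have h := integral_mul_le_Lp_mul_Lq_of_nonneg (μ := P) hpq
    (f := fun ω => ‖S ω‖) (g := fun ω => ‖U ω‖)
    (Eventually.of_forall fun ω => norm_nonneg _)
    (Eventually.of_forall fun ω => norm_nonneg _)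
    (by simpa using hS.norm) (by simpa using hU.norm)
  calc ∫ ω, ‖S ω‖ * ‖U ω‖ ∂P
      ≤ (∫ ω, ‖S ω‖ ^ (2:ℝ) ∂P) ^ ((1:ℝ)/2) * (∫ ω, ‖U ω‖ ^ (2:ℝ) ∂P) ^ ((1:ℝ)/2) := h
    _ = _ := by
        have h2 : ∀ x : ℝ, x ^ (2:ℝ) = x ^ (2:ℕ) := fun x => by
          rw [show ((2:ℝ)) = ((2:ℕ):ℝ) by norm_num, Real.rpow_natCast]
        simp_rw [h2, Real.sqrt_eq_rpow]

lemma sum_nnnorm_le_traceNorm {A : H →L[ℝ] H} {n : ℕ} {e f : Fin n → H}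
    (he : Orthonormal ℝ e) (hf : Orthonormal ℝ f) :
    ∑ j, (‖⟪A (e j), f j⟫_ℝ‖₊ : ℝ≥0∞) ≤ traceNorm A :=
  le_iSup_of_le n <| le_iSup_of_le e <| le_iSup_of_le f <|
    le_iSup_of_le he <| le_iSup_of_le hf le_rfl

lemma traceNorm_integral_rankOne_le {T₁ T₂ : Ω → H}
    (h₁ : MemLp T₁ 2 P) (h₂ : MemLp T₂ 2 P) :
    traceNorm (∫ ω, rankOne (T₁ ω) (T₂ ω) ∂P) ≤
      ENNReal.ofReal (Real.sqrt (∫ ω, ‖T₁ ω‖ ^ 2 ∂P) * Real.sqrt (∫ ω, ‖T₂ ω‖ ^ 2 ∂P)) := by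
  refine iSup_le fun n => iSup_le fun e => iSup_le fun f => iSup_le fun he => iSup_le fun hf => ?_
  have hgint : ∀ j : Fin n, Integrable (fun ω => ⟪e j, T₂ ω⟫_ℝ * ⟪T₁ ω, f j⟫_ℝ) P :=
    fun j => integrable_mul_of_mem2 (h₂.const_inner (e j)) (h₁.inner_const (f j))
  have hval : ∀ j : Fin n, ⟪(∫ ω, rankOne (T₁ ω) (T₂ ω) ∂P) (e j), f j⟫_ℝ
      = ∫ ω, ⟪e j, T₂ ω⟫_ℝ * ⟪T₁ ω, f j⟫_ℝ ∂P :=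
    fun j => inner_integral_rankOne (integrable_rankOne h₁ h₂) (e j) (f j)
  have hreal : ∑ j, |⟪(∫ ω, rankOne (T₁ ω) (T₂ ω) ∂P) (e j), f j⟫_ℝ|
      ≤ Real.sqrt (∫ ω, ‖T₁ ω‖ ^ 2 ∂P) * Real.sqrt (∫ ω, ‖T₂ ω‖ ^ 2 ∂P) := by
    calc ∑ j, |⟪(∫ ω, rankOne (T₁ ω) (T₂ ω) ∂P) (e j), f j⟫_ℝ|
        = ∑ j, |∫ ω, ⟪e j, T₂ ω⟫_ℝ * ⟪T₁ ω, f j⟫_ℝ ∂P| := by simp_rw [hval]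
      _ ≤ ∑ j, ∫ ω, |⟪e j, T₂ ω⟫_ℝ * ⟪T₁ ω, f j⟫_ℝ| ∂P :=
          Finset.sum_le_sum fun j _ => by
            simpa only [Real.norm_eq_abs] using (norm_integral_le_integral_norm (μ := P)
              (fun ω => ⟪e j, T₂ ω⟫_ℝ * ⟪T₁ ω, f j⟫_ℝ))
      _ = ∫ ω, ∑ j, |⟪e j, T₂ ω⟫_ℝ * ⟪T₁ ω, f j⟫_ℝ| ∂P :=
          (integral_finset_sum Finset.univ fun j _ => (hgint j).abs).symm
      _ ≤ ∫ ω, ‖T₁ ω‖ * ‖T₂ ω‖ ∂P := by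
          refine integral_mono (integrable_finset_sum Finset.univ fun j _ => (hgint j).abs)
            (integrable_mul_of_mem2 h₁.norm h₂.norm) fun ω => ?_
          exact pointwise_cs he hf (T₁ ω) (T₂ ω)
      _ ≤ _ := integral_norm_mul_le h₁ h₂
  calc ∑ j, (‖⟪(∫ ω, rankOne (T₁ ω) (T₂ ω) ∂P) (e j), f j⟫_ℝ‖₊ : ℝ≥0∞)
      = ENNReal.ofReal (∑ j, |⟪(∫ ω, rankOne (T₁ ω) (T₂ ω) ∂P) (e j), f j⟫_ℝ|) := by
        rw [ENNReal.ofReal_sum_of_nonneg fun j _ => abs_nonneg _]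
        exact Finset.sum_congr rfl fun j _ => by
          rw [← enorm_eq_nnnorm, ← ofReal_norm, Real.norm_eq_abs]
    _ ≤ _ := ENNReal.ofReal_le_ofReal hreal

lemma parseval (x : H) : ∑' i : bIdx H, ⟪x, bStd H i⟫_ℝ ^ 2 = ‖x‖ ^ 2 := by
  have h := (bStd H).tsum_inner_mul_inner x x
  rw [real_inner_self_eq_norm_sq] at h
  rw [← h]
  exact tsum_congr fun i => by rw [sq, real_inner_comm ((bStd H) i) x]

lemma summable_parseval (x : H) : Summable fun i : bIdx H => ⟪x, bStd H i⟫_ℝ ^ 2 :=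
  ((bStd H).orthonormal.inner_products_summable x).congr fun i => by
    rw [Real.norm_eq_abs, sq_abs, sq, sq, real_inner_comm]

lemma ofReal_integral_normSq_le_traceNorm [TopologicalSpace.SeparableSpace H]
    {T : Ω → H} (hT : MemLp T 2 P) :
    ENNReal.ofReal (∫ ω, ‖T ω‖ ^ 2 ∂P) ≤ traceNorm (∫ ω, rankOne (T ω) (T ω) ∂P) := by
  classical
  have hcnt : Countable (bIdx H) := (bStd H).orthonormal.countable_index
  set R := ∫ ω, rankOne (T ω) (T ω) ∂P with hR
  have hint : ∀ v : H, Integrable (fun ω => ⟪T ω, v⟫_ℝ ^ 2) P := fun v => by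
    have h2 : MemLp (fun ω => ⟪T ω, v⟫_ℝ) 2 P := hT.inner_const v
    exact (memLp_two_iff_integrable_sq h2.1).mp h2
  have hRdiag : ∀ v : H, ⟪R v, v⟫_ℝ = ∫ ω, ⟪T ω, v⟫_ℝ ^ 2 ∂P := fun v => by
    rw [hR, inner_integral_rankOne (integrable_rankOne hT hT)]
    exact integral_congr_ae (Eventually.of_forall fun ω =>
      show ⟪v, T ω⟫_ℝ * ⟪T ω, v⟫_ℝ = ⟪T ω, v⟫_ℝ ^ 2 by rw [sq, real_inner_comm v (T ω)])
  have hA : ENNReal.ofReal (∫ ω, ‖T ω‖ ^ 2 ∂P)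
      = ∑' i : bIdx H, ∫⁻ ω, ENNReal.ofReal (⟪T ω, bStd H i⟫_ℝ ^ 2) ∂P := by
    rw [ofReal_integral_eq_lintegral_ofReal
      ((memLp_two_iff_integrable_sq_norm hT.1).mp hT)
      (Eventually.of_forall fun ω => sq_nonneg _)]
    have hmeas : ∀ i : bIdx H,
        AEMeasurable (fun ω => ENNReal.ofReal (⟪T ω, bStd H i⟫_ℝ ^ 2)) P := fun i =>
      ENNReal.measurable_ofReal.comp_aemeasurable
        (((hT.inner_const (bStd H i)).1.aemeasurable).pow_const 2)
    rw [← lintegral_tsum hmeas]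
    refine lintegral_congr fun ω => ?_
    rw [← ENNReal.ofReal_tsum_of_nonneg (fun i => sq_nonneg _) (summable_parseval (T ω)),
      parseval]
  rw [hA, ENNReal.tsum_eq_iSup_sum]
  refine iSup_le fun s => ?_
  have hterm : ∀ i : bIdx H, ∫⁻ ω, ENNReal.ofReal (⟪T ω, bStd H i⟫_ℝ ^ 2) ∂P
      ≤ (‖⟪R (bStd H i), bStd H i⟫_ℝ‖₊ : ℝ≥0∞) := fun i => by
    rw [← ofReal_integral_eq_lintegral_ofReal (hint (bStd H i))
      (Eventually.of_forall fun ω => sq_nonneg _), ← hRdiag, ← enorm_eq_nnnorm, ← ofReal_norm,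
      Real.norm_eq_abs]
    exact ENNReal.ofReal_le_ofReal (le_abs_self _)
  calc ∑ i ∈ s, ∫⁻ ω, ENNReal.ofReal (⟪T ω, bStd H i⟫_ℝ ^ 2) ∂P
      ≤ ∑ i ∈ s, (‖⟪R (bStd H i), bStd H i⟫_ℝ‖₊ : ℝ≥0∞) :=
        Finset.sum_le_sum fun i _ => hterm i
    _ = ∑ j : Fin s.card,
          (‖⟪R (bStd H (s.equivFin.symm j)), bStd H (s.equivFin.symm j)⟫_ℝ‖₊ : ℝ≥0∞) := by
        rw [← Finset.sum_coe_sort s, ← Equiv.sum_comp s.equivFin.symm]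
    _ ≤ traceNorm R := by
        refine sum_nnnorm_le_traceNorm ?_ ?_ <;>
        · refine (bStd H).orthonormal.comp _ ?_
          exact Subtype.val_injective.comp s.equivFin.symm.injective

end Aux

set_option maxHeartbeats 2000000 in

/-- Lemma on cross-covariance operators. If the cross-covariance operator
`𝓡₁₂ = E[T₁ ⊗ T₂]` of two centered square-integrable `H`-valued random variables is
self-adjoint, then `𝓡₁₂ = 𝓡₂₁` and `‖𝓡₁₂‖₁ ≤ ‖𝓡₁₁‖₁^{1/2} ‖𝓡₂₂‖₁^{1/2}`. -/
theorem crossCov_selfAdjoint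
    {H : Type*} [NormedAddCommGroup H] [InnerProductSpace ℝ H] [CompleteSpace H]
    [TopologicalSpace.SeparableSpace H]
    {Ω : Type*} [MeasurableSpace Ω] (P : Measure Ω) [IsProbabilityMeasure P]
    (T₁ T₂ : Ω → H)
    (h₁ : MemLp T₁ 2 P) (h₂ : MemLp T₂ 2 P)
    (hc₁ : ∫ ω, T₁ ω ∂P = 0) (hc₂ : ∫ ω, T₂ ω ∂P = 0)
    (hsa : ContinuousLinearMap.adjoint (∫ ω, rankOne (T₁ ω) (T₂ ω) ∂P)
      = ∫ ω, rankOne (T₁ ω) (T₂ ω) ∂P) :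
    (∫ ω, rankOne (T₁ ω) (T₂ ω) ∂P) = (∫ ω, rankOne (T₂ ω) (T₁ ω) ∂P) ∧
      traceNorm (∫ ω, rankOne (T₁ ω) (T₂ ω) ∂P)
        ≤ traceNorm (∫ ω, rankOne (T₁ ω) (T₁ ω) ∂P) ^ (1 / 2 : ℝ) *
            traceNorm (∫ ω, rankOne (T₂ ω) (T₂ ω) ∂P) ^ (1 / 2 : ℝ) := by
  constructor
  · ext x
    refine ext_inner_right ℝ fun y => ?_
    have h1 : ⟪(∫ ω, rankOne (T₁ ω) (T₂ ω) ∂P) x, y⟫_ℝ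
        = ⟪x, (∫ ω, rankOne (T₁ ω) (T₂ ω) ∂P) y⟫_ℝ := by
      have := ContinuousLinearMap.adjoint_inner_left
        (∫ ω, rankOne (T₁ ω) (T₂ ω) ∂P) y x
      rw [hsa] at this
      rw [this, real_inner_comm]
    rw [h1, real_inner_comm, inner_integral_rankOne (integrable_rankOne h₁ h₂),
      inner_integral_rankOne (integrable_rankOne h₂ h₁)]
    exact integral_congr_ae (Eventually.of_forall fun ω => by
      show ⟪y, T₂ ω⟫_ℝ * ⟪T₁ ω, x⟫_ℝ = ⟪x, T₁ ω⟫_ℝ * ⟪T₂ ω, y⟫_ℝ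
      rw [real_inner_comm y (T₂ ω), real_inner_comm (T₁ ω) x]; ring)
  · have ha : (0:ℝ) ≤ ∫ ω, ‖T₁ ω‖ ^ 2 ∂P := integral_nonneg fun ω => sq_nonneg _
    have hb : (0:ℝ) ≤ ∫ ω, ‖T₂ ω‖ ^ 2 ∂P := integral_nonneg fun ω => sq_nonneg _
    calc traceNorm (∫ ω, rankOne (T₁ ω) (T₂ ω) ∂P)
        ≤ ENNReal.ofReal (Real.sqrt (∫ ω, ‖T₁ ω‖ ^ 2 ∂P) * Real.sqrt (∫ ω, ‖T₂ ω‖ ^ 2 ∂P)) :=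
          traceNorm_integral_rankOne_le h₁ h₂
      _ = ENNReal.ofReal (Real.sqrt (∫ ω, ‖T₁ ω‖ ^ 2 ∂P)) *
            ENNReal.ofReal (Real.sqrt (∫ ω, ‖T₂ ω‖ ^ 2 ∂P)) :=
          ENNReal.ofReal_mul (Real.sqrt_nonneg _)
      _ = ENNReal.ofReal (∫ ω, ‖T₁ ω‖ ^ 2 ∂P) ^ (1 / 2 : ℝ) *
            ENNReal.ofReal (∫ ω, ‖T₂ ω‖ ^ 2 ∂P) ^ (1 / 2 : ℝ) := by
          rw [Real.sqrt_eq_rpow, Real.sqrt_eq_rpow,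
            ← ENNReal.ofReal_rpow_of_nonneg ha (by norm_num),
            ← ENNReal.ofReal_rpow_of_nonneg hb (by norm_num)]
      _ ≤ traceNorm (∫ ω, rankOne (T₁ ω) (T₁ ω) ∂P) ^ (1 / 2 : ℝ) *
            traceNorm (∫ ω, rankOne (T₂ ω) (T₂ ω) ∂P) ^ (1 / 2 : ℝ) :=
          mul_le_mul'
            (ENNReal.rpow_le_rpow (ofReal_integral_normSq_le_traceNorm h₁) (by norm_num))
            (ENNReal.rpow_le_rpow (ofReal_integral_normSq_le_traceNorm h₂) (by norm_num))


end RF
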